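/- Strict improvement by moving mass to a strictly nearer cluster: let Q be a row-stochastic quantizer, m ∈ Fin M, q ≠ s ∈ Fin K with Q m q = v > 0. Assume at Q each vector p_{XT}(·,h) has positive coordinate sum (and remains so along the transfer), F is differentiable at each p_{XT}(·,h) with partials c_h^n, each g_k is differentiable at p_Z(k) with d_k = g_k'(p_Z(k)), and D(m,s) < D(m,q), where D(m,k) = β · ∑_h ∑_n c_h^n · (p n m) · A k h + d_k · p_{Y_m}. Let Q' equal Q except that Q' m q = 0 and Q' m s = Q m s + v. Then J(Q') < J(Q). -/

import Mathlib

def simplex (N : ℕ) : Set (Fin N → ℝ) := {q | (∀ n, 0 ≤ q n) ∧ ∑ n, q n = 1}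

/-- `f` is concave on the standard probability simplex. -/
def ConcaveOnSimplex {N : ℕ} (f : (Fin N → ℝ) → ℝ) : Prop :=
  ∀ a ∈ simplex N, ∀ b ∈ simplex N, ∀ lam : ℝ, lam ∈ Set.Icc (0:ℝ) 1 →
    lam * f a + (1 - lam) * f b ≤ f (lam • a + (1 - lam) • b)

/-- The impurity functional `F(v) = (∑ n, v n) * f (v / ∑ n, v n)`. -/
noncomputable def impurity {N : ℕ} (f : (Fin N → ℝ) → ℝ) (v : Fin N → ℝ) : ℝ :=
  (∑ n, v n) * f (fun n => v n / ∑ m, v m)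

/-- A joint distribution on `Fin N × Fin M`. -/
def IsJointDist {N M : ℕ} (p : Fin N → Fin M → ℝ) : Prop :=
  (∀ n m, 0 ≤ p n m) ∧ ∑ n, ∑ m, p n m = 1

/-- A row-stochastic matrix. -/
def RowStochastic {M K : ℕ} (Q : Fin M → Fin K → ℝ) : Prop :=
  (∀ m k, 0 ≤ Q m k) ∧ ∀ m, ∑ k, Q m k = 1

/-- Marginal of the data `Y`: `p_{Y_m} = ∑ n, p n m`. -/
noncomputable def pY {N M : ℕ} (p : Fin N → Fin M → ℝ) (m : Fin M) : ℝ := ∑ n, p n m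

/-- Joint distribution of the source and the quantizer output. -/
noncomputable def pXZ {N M K : ℕ} (p : Fin N → Fin M → ℝ) (Q : Fin M → Fin K → ℝ)
    (n : Fin N) (k : Fin K) : ℝ := ∑ m, p n m * Q m k

/-- Marginal of the quantizer output. -/
noncomputable def pZ {N M K : ℕ} (p : Fin N → Fin M → ℝ) (Q : Fin M → Fin K → ℝ)
    (k : Fin K) : ℝ := ∑ n, pXZ p Q n k

/-- Joint distribution of the source and the channel output. -/
noncomputable def pXT {N M K H : ℕ} (p : Fin N → Fin M → ℝ) (Q : Fin M → Fin K → ℝ)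
    (A : Fin K → Fin H → ℝ) (n : Fin N) (h : Fin H) : ℝ := ∑ k, pXZ p Q n k * A k h

/-- The objective `J(Q) = β ∑_h F(p_{XT}(·,h)) + ∑_k g_k(p_Z(k))`. -/
noncomputable def J {N M K H : ℕ} (β : ℝ) (f : (Fin N → ℝ) → ℝ) (g : Fin K → ℝ → ℝ)
    (p : Fin N → Fin M → ℝ) (A : Fin K → Fin H → ℝ) (Q : Fin M → Fin K → ℝ) : ℝ :=
  β * ∑ h, impurity f (fun n => pXT p Q A n h) + ∑ k, g k (pZ p Q k)

/-- A deterministic (hard) quantizer. -/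
def Deterministic {M K : ℕ} (Q : Fin M → Fin K → ℝ) : Prop :=
  ∀ m, ∃ k, Q m k = 1 ∧ ∀ k', k' ≠ k → Q m k' = 0

lemma key_strict (φ : ℝ → ℝ) (D : ℝ) (hd : HasDerivAt φ D 0) (hD : D < 0)
    (hconc : ∀ t ∈ Set.Icc (0:ℝ) 1, (1-t) * φ 0 + t * φ 1 ≤ φ t) : φ 1 < φ 0 := by
  have hslope : Filter.Tendsto (slope φ 0) (nhdsWithin 0 (Set.Ioi 0)) (nhds D) :=
    (hasDerivAt_iff_tendsto_slope.1 hd).mono_left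
      (nhdsWithin_mono _ (fun x hx => by simpa using ne_of_gt hx))
  have hge : ∀ᶠ t in nhdsWithin 0 (Set.Ioi 0), φ 1 - φ 0 ≤ slope φ 0 t := by
    filter_upwards [Ioc_mem_nhdsGT_of_mem (Set.mem_Ico.2 ⟨le_refl (0:ℝ), one_pos⟩)] with t ht
    have h1 := hconc t ⟨le_of_lt ht.1, ht.2⟩
    rw [slope_def_field, sub_zero]
    rw [le_div_iff₀ ht.1]
    linarith
  have hle : φ 1 - φ 0 ≤ D := ge_of_tendsto hslope hge
  linarith

lemma persp {N : ℕ} (f : (Fin N → ℝ) → ℝ) (hf : ConcaveOnSimplex f)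
    (a b : Fin N → ℝ) (ha : ∀ n, 0 ≤ a n) (hb : ∀ n, 0 ≤ b n)
    (hsa : 0 < ∑ n, a n) (hsb : 0 < ∑ n, b n)
    (lam : ℝ) (hlam : lam ∈ Set.Icc (0:ℝ) 1) :
    lam * impurity f a + (1-lam) * impurity f b ≤
      impurity f (fun n => lam * a n + (1-lam) * b n) := by
  set Sa := ∑ n, a n with hSa
  set Sb := ∑ n, b n with hSb
  have hlam0 := hlam.1
  have hlam1 := hlam.2
  have hS : ∑ n, (lam * a n + (1-lam) * b n) = lam * Sa + (1-lam) * Sb := by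
    rw [Finset.sum_add_distrib, ← Finset.mul_sum, ← Finset.mul_sum]
  set S := lam * Sa + (1-lam) * Sb with hSdef
  have hSpos : 0 < S := by
    rcases eq_or_lt_of_le hlam0 with h | h
    · have : S = Sb := by rw [hSdef, ← h]; ring
      linarith
    · have h1 : 0 < lam * Sa := mul_pos h hsa
      have h2 : 0 ≤ (1-lam) * Sb := mul_nonneg (by linarith) hsb.le
      linarith
  have hamem : (fun n => a n / Sa) ∈ simplex N := by
    refine ⟨fun n => div_nonneg (ha n) hsa.le, ?_⟩
    rw [← Finset.sum_div, div_self hsa.ne']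
  have hbmem : (fun n => b n / Sb) ∈ simplex N := by
    refine ⟨fun n => div_nonneg (hb n) hsb.le, ?_⟩
    rw [← Finset.sum_div, div_self hsb.ne']
  set μ := lam * Sa / S with hμ
  have hμmem : μ ∈ Set.Icc (0:ℝ) 1 := by
    constructor
    · exact div_nonneg (mul_nonneg hlam0 hsa.le) hSpos.le
    · rw [div_le_one hSpos]
      have : 0 ≤ (1-lam) * Sb := mul_nonneg (by linarith) hsb.le
      linarith
  have hkey := hf _ hamem _ hbmem μ hμmem
  have harg : (μ • (fun n => a n / Sa) + (1-μ) • (fun n => b n / Sb)) =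
      (fun n => (lam * a n + (1-lam) * b n) / ∑ m, (lam * a m + (1-lam) * b m)) := by
    funext n
    rw [hS]
    simp only [Pi.add_apply, Pi.smul_apply, smul_eq_mul, hμ]
    field_simp
    ring
  rw [harg] at hkey
  have hmul := mul_le_mul_of_nonneg_left hkey hSpos.le
  have h1 : S * (μ * f (fun n => a n / Sa)) = lam * impurity f a := by
    rw [impurity, ← hSa, hμ]
    field_simp
  have h2 : S * ((1-μ) * f (fun n => b n / Sb)) = (1-lam) * impurity f b := by
    rw [impurity, ← hSb, hμ]
    have : 1 - lam * Sa / S = (1-lam) * Sb / S := by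
      field_simp
      ring
    rw [this]
    field_simp
  calc lam * impurity f a + (1-lam) * impurity f b
      = S * (μ * f (fun n => a n / Sa) + (1-μ) * f (fun n => b n / Sb)) := by
        rw [mul_add, h1, h2]
    _ ≤ S * f (fun n => (lam * a n + (1-lam) * b n) / ∑ m, (lam * a m + (1-lam) * b m)) := hmul
    _ = impurity f (fun n => lam * a n + (1-lam) * b n) := by rw [impurity, hS]

/-- Strict improvement by moving mass to a strictly nearer cluster. -/
theorem stmt_7 {N M K H : ℕ}
    (β : ℝ) (hβ : 0 < β)
    (p : Fin N → Fin M → ℝ) (hp : IsJointDist p)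
    (A : Fin K → Fin H → ℝ) (hA : RowStochastic A)
    (f : (Fin N → ℝ) → ℝ) (hf : ConcaveOnSimplex f)
    (g : Fin K → ℝ → ℝ) (hg : ∀ k, ConcaveOn ℝ Set.univ (g k))
    (Q : Fin M → Fin K → ℝ) (hQ : RowStochastic Q)
    (m : Fin M) (q s : Fin K) (hqs : q ≠ s)
    (v : ℝ) (hv : 0 < v) (hQmq : Q m q = v)
    (hpos : ∀ t ∈ Set.Icc (0:ℝ) 1, ∀ h,
      0 < ∑ n, (pXT p Q A n h + t * (v * p n m * (A s h - A q h))))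
    (Dh : Fin H → ((Fin N → ℝ) →L[ℝ] ℝ))
    (hFd : ∀ h, HasFDerivAt (impurity f) (Dh h) (fun n => pXT p Q A n h))
    (c : Fin H → Fin N → ℝ) (hc : ∀ h n, Dh h (Pi.single n 1) = c h n)
    (d : Fin K → ℝ) (hgd : ∀ k, HasDerivAt (g k) (d k) (pZ p Q k))
    (hnear : β * ∑ h, ∑ n, c h n * p n m * A s h + d s * pY p m <
             β * ∑ h, ∑ n, c h n * p n m * A q h + d q * pY p m) :
    J β f g p A (fun m' k' => if m' = m then
        (if k' = q then 0 else if k' = s then Q m s + v else Q m' k')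
      else Q m' k') < J β f g p A Q := by
  classical
  obtain ⟨hpnn, -⟩ := hp
  obtain ⟨hAnn, hArow⟩ := hA
  obtain ⟨hQnn, hQrow⟩ := hQ
  set dlt : Fin K → ℝ := fun k => if k = q then -v else if k = s then v else 0 with hdlt
  have hdlt_split : ∀ r : Fin K → ℝ, ∑ k, r k * dlt k = v * r s - v * r q := by
    intro r
    have hterm : ∀ k, r k * dlt k
        = (if k = q then -(v * r q) else 0) + (if k = s then v * r s else 0) := by
      intro k
      by_cases h1 : k = q
      · subst h1
        have : k ≠ s := hqs
        simp [hdlt, this]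
        ring
      · by_cases h2 : k = s
        · subst h2
          simp [hdlt, h1]
          ring
        · simp [hdlt, h1, h2]
    rw [Finset.sum_congr rfl (fun k _ => hterm k), Finset.sum_add_distrib,
        Finset.sum_ite_eq', Finset.sum_ite_eq']
    simp
    ring
  set Q' : Fin M → Fin K → ℝ := (fun m' k' => if m' = m then
        (if k' = q then 0 else if k' = s then Q m s + v else Q m' k')
      else Q m' k') with hQ'def
  -- shifted joint distributions
  have hXZ' : ∀ n k, pXZ p Q' n k = pXZ p Q n k + p n m * dlt k := by
    intro n k
    have hrow : ∀ m', p n m' * Q' m' k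
        = p n m' * Q m' k + (if m' = m then p n m * dlt k else 0) := by
      intro m'
      by_cases hm : m' = m
      · subst hm
        simp only [hQ'def, if_pos rfl, hdlt]
        by_cases hk : k = q
        · subst hk; simp [hQmq]
        · by_cases hk' : k = s
          · subst hk'; simp [hk]; ring
          · simp [hk, hk']
      · simp [hQ'def, hm]
    unfold pXZ
    rw [Finset.sum_congr rfl (fun m' _ => hrow m'), Finset.sum_add_distrib,
        Finset.sum_ite_eq']
    simp
  have hXT' : ∀ n h, pXT p Q' A n h
      = pXT p Q A n h + v * p n m * (A s h - A q h) := by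
    intro n h
    unfold pXT
    have hterm : ∀ k, pXZ p Q' n k * A k h
        = pXZ p Q n k * A k h + p n m * (A k h * dlt k) := by
      intro k; rw [hXZ' n k]; ring
    rw [Finset.sum_congr rfl (fun k _ => hterm k), Finset.sum_add_distrib,
        ← Finset.mul_sum, hdlt_split (fun k => A k h)]
    ring
  have hZ' : ∀ k, pZ p Q' k = pZ p Q k + pY p m * dlt k := by
    intro k
    unfold pZ
    rw [Finset.sum_congr rfl (fun n _ => hXZ' n k), Finset.sum_add_distrib,
        ← Finset.sum_mul]
    rfl
  -- the path
  set φ : ℝ → ℝ := fun t =>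
    β * ∑ h, impurity f (fun n => pXT p Q A n h + t * (v * p n m * (A s h - A q h)))
      + ∑ k, g k (pZ p Q k + t * (pY p m * dlt k)) with hφ
  have hφ0 : φ 0 = J β f g p A Q := by
    rw [hφ]; simp [J]
  have hφ1 : φ 1 = J β f g p A Q' := by
    rw [hφ]
    simp only [J, one_mul]
    congr 1
    · congr 1
      apply Finset.sum_congr rfl
      intro h _
      congr 1
      funext n
      rw [hXT' n h]
    · apply Finset.sum_congr rfl
      intro k _
      rw [hZ' k]
  -- nonnegativity along the path
  have hXZnn : ∀ n k, 0 ≤ pXZ p Q n k := by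
    intro n k
    unfold pXZ
    exact Finset.sum_nonneg (fun m' _ => mul_nonneg (hpnn n m') (hQnn m' k))
  have hXZq : ∀ n, v * p n m ≤ pXZ p Q n q := by
    intro n
    unfold pXZ
    calc v * p n m = p n m * Q m q := by rw [hQmq]; ring
      _ ≤ ∑ m', p n m' * Q m' q :=
        Finset.single_le_sum (f := fun m' => p n m' * Q m' q)
          (fun m' _ => mul_nonneg (hpnn n m') (hQnn m' q)) (Finset.mem_univ m)
  have hnonneg : ∀ t ∈ Set.Icc (0:ℝ) 1, ∀ h n,
      0 ≤ pXT p Q A n h + t * (v * p n m * (A s h - A q h)) := by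
    intro t ht h n
    have key : pXT p Q A n h + t * (v * p n m * (A s h - A q h))
        = ∑ k, (pXZ p Q n k + t * (p n m * dlt k)) * A k h := by
      have hterm : ∀ k, (pXZ p Q n k + t * (p n m * dlt k)) * A k h
          = pXZ p Q n k * A k h + (t * p n m) * (A k h * dlt k) := fun k => by ring
      rw [Finset.sum_congr rfl (fun k _ => hterm k), Finset.sum_add_distrib,
          ← Finset.mul_sum, hdlt_split (fun k => A k h)]
      unfold pXT
      ring
    rw [key]
    apply Finset.sum_nonneg
    intro k _
    apply mul_nonneg _ (hAnn k h)
    by_cases hk : k = q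
    · subst hk
      have h1 := hXZq n
      have hdq : dlt k = -v := by simp [hdlt]
      rw [hdq]
      nlinarith [mul_nonneg (mul_nonneg (sub_nonneg.2 ht.2) (hpnn n m)) hv.le, hXZq n, mul_nonneg ht.1 (hpnn n m)]
    · by_cases hk' : k = s
      · subst hk'
        have hds : dlt k = v := by simp [hdlt, hk]
        rw [hds]
        have h2 := mul_nonneg ht.1 (mul_nonneg (hpnn n m) hv.le)
        have := hXZnn n k
        linarith
      · have hd0 : dlt k = 0 := by simp [hdlt, hk, hk']
        rw [hd0]
        simpa using hXZnn n k
  -- concavity along the path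
  have hconc : ∀ t ∈ Set.Icc (0:ℝ) 1, (1-t) * φ 0 + t * φ 1 ≤ φ t := by
    intro t ht
    have ht0 := ht.1
    have ht1 := ht.2
    simp only [hφ]
    have hX : ∀ h,
        t * impurity f (fun n => pXT p Q A n h + 1 * (v * p n m * (A s h - A q h)))
          + (1-t) * impurity f (fun n => pXT p Q A n h + 0 * (v * p n m * (A s h - A q h)))
        ≤ impurity f (fun n => pXT p Q A n h + t * (v * p n m * (A s h - A q h))) := by
      intro h
      have hh := persp f hf
        (fun n => pXT p Q A n h + 1 * (v * p n m * (A s h - A q h)))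
        (fun n => pXT p Q A n h + 0 * (v * p n m * (A s h - A q h)))
        (fun n => hnonneg 1 ⟨zero_le_one, le_refl 1⟩ h n)
        (fun n => hnonneg 0 ⟨le_refl 0, zero_le_one⟩ h n)
        (hpos 1 ⟨zero_le_one, le_refl 1⟩ h)
        (hpos 0 ⟨le_refl 0, zero_le_one⟩ h)
        t ht
      have harg : (fun n => t * (pXT p Q A n h + 1 * (v * p n m * (A s h - A q h)))
          + (1-t) * (pXT p Q A n h + 0 * (v * p n m * (A s h - A q h))))
          = (fun n => pXT p Q A n h + t * (v * p n m * (A s h - A q h))) := by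
        funext n; ring
      rw [harg] at hh
      exact hh
    have hY : ∀ k,
        t * g k (pZ p Q k + 1 * (pY p m * dlt k))
          + (1-t) * g k (pZ p Q k + 0 * (pY p m * dlt k))
        ≤ g k (pZ p Q k + t * (pY p m * dlt k)) := by
      intro k
      have hcv := (hg k).2 (Set.mem_univ (pZ p Q k + 1 * (pY p m * dlt k)))
        (Set.mem_univ (pZ p Q k + 0 * (pY p m * dlt k))) ht0 (by linarith : (0:ℝ) ≤ 1 - t)
        (by ring : t + (1-t) = 1)
      have harg : t • (pZ p Q k + 1 * (pY p m * dlt k))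
          + (1-t) • (pZ p Q k + 0 * (pY p m * dlt k))
          = pZ p Q k + t * (pY p m * dlt k) := by
        simp only [smul_eq_mul]; ring
      rw [harg] at hcv
      simpa [smul_eq_mul] using hcv
    have hXsum : t * (∑ h, impurity f (fun n => pXT p Q A n h + 1 * (v * p n m * (A s h - A q h))))
        + (1-t) * (∑ h, impurity f (fun n => pXT p Q A n h + 0 * (v * p n m * (A s h - A q h))))
        ≤ ∑ h, impurity f (fun n => pXT p Q A n h + t * (v * p n m * (A s h - A q h))) := by
      rw [Finset.mul_sum, Finset.mul_sum, ← Finset.sum_add_distrib]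
      exact Finset.sum_le_sum (fun h _ => hX h)
    have hYsum : t * (∑ k, g k (pZ p Q k + 1 * (pY p m * dlt k)))
        + (1-t) * (∑ k, g k (pZ p Q k + 0 * (pY p m * dlt k)))
        ≤ ∑ k, g k (pZ p Q k + t * (pY p m * dlt k)) := by
      rw [Finset.mul_sum, Finset.mul_sum, ← Finset.sum_add_distrib]
      exact Finset.sum_le_sum (fun k _ => hY k)
    have hβX := mul_le_mul_of_nonneg_left hXsum hβ.le
    nlinarith [hβX, hYsum]
  -- derivative along the path
  set D0 : ℝ := β * ∑ h, Dh h (fun n => v * p n m * (A s h - A q h))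
      + ∑ k, d k * (pY p m * dlt k) with hD0def
  have hderiv : HasDerivAt φ D0 0 := by
    rw [hφ, hD0def]
    apply HasDerivAt.add
    · apply HasDerivAt.const_mul
      apply HasDerivAt.fun_sum
      intro h _
      have hγ : HasDerivAt
          (fun t : ℝ => (fun n => pXT p Q A n h + t * (v * p n m * (A s h - A q h))))
          (fun n => v * p n m * (A s h - A q h)) 0 := by
        have h1 : (fun t : ℝ => (fun n : Fin N => pXT p Q A n h + t * (v * p n m * (A s h - A q h))))
            = fun t : ℝ => (fun n => pXT p Q A n h)
              + t • (fun n => v * p n m * (A s h - A q h)) := by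
          funext t; funext n
          simp [Pi.add_apply, Pi.smul_apply, smul_eq_mul]
        rw [h1]
        simpa using
          (((hasDerivAt_id (0:ℝ)).smul_const (fun n => v * p n m * (A s h - A q h))).const_add
            (fun n => pXT p Q A n h))
      have hpt : (fun n => pXT p Q A n h + (0:ℝ) * (v * p n m * (A s h - A q h)))
          = fun n => pXT p Q A n h := by funext n; ring
      have hFd2 : HasFDerivAt (impurity f) (Dh h)
          (fun n => pXT p Q A n h + (0:ℝ) * (v * p n m * (A s h - A q h))) := by
        rw [hpt]; exact hFd h
      exact hFd2.comp_hasDerivAt 0 hγ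
    · apply HasDerivAt.fun_sum
      intro k _
      have hγ : HasDerivAt (fun t : ℝ => pZ p Q k + t * (pY p m * dlt k))
          (pY p m * dlt k) 0 := by
        simpa using ((hasDerivAt_id (0:ℝ)).mul_const (pY p m * dlt k)).const_add (pZ p Q k)
      have hg2 : HasDerivAt (g k) (d k) (pZ p Q k + 0 * (pY p m * dlt k)) := by
        simpa using hgd k
      exact hg2.comp 0 hγ
  -- the derivative is negative
  have hDw : ∀ h, Dh h (fun n => v * p n m * (A s h - A q h))
      = ∑ n, (v * p n m * (A s h - A q h)) * c h n := by
    intro h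
    have hdecomp : (fun n => v * p n m * (A s h - A q h))
        = ∑ n, (v * p n m * (A s h - A q h)) • (Pi.single n 1 : Fin N → ℝ) := by
      funext n'
      rw [Finset.sum_apply]
      simp [Pi.single_apply, Finset.sum_ite_eq]
    rw [hdecomp, map_sum]
    apply Finset.sum_congr rfl
    intro n _
    rw [map_smul, hc, smul_eq_mul]
  have hD0neg : D0 < 0 := by
    have hsum2 : ∑ k, d k * (pY p m * dlt k) = pY p m * (v * d s - v * d q) := by
      have hterm : ∀ k, d k * (pY p m * dlt k) = pY p m * (d k * dlt k) := fun k => by ring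
      rw [Finset.sum_congr rfl (fun k _ => hterm k), ← Finset.mul_sum, hdlt_split d]
    have hsum1 : ∑ h, Dh h (fun n => v * p n m * (A s h - A q h))
        = v * ((∑ h, ∑ n, c h n * p n m * A s h) - (∑ h, ∑ n, c h n * p n m * A q h)) := by
      rw [Finset.sum_congr rfl (fun h _ => hDw h)]
      have hper : ∀ h, ∑ n, v * p n m * (A s h - A q h) * c h n
          = v * (∑ n, c h n * p n m * A s h) - v * (∑ n, c h n * p n m * A q h) := by
        intro h
        rw [Finset.mul_sum, Finset.mul_sum, ← Finset.sum_sub_distrib]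
        exact Finset.sum_congr rfl (fun n _ => by ring)
      rw [Finset.sum_congr rfl (fun h _ => hper h), Finset.sum_sub_distrib,
          ← Finset.mul_sum, ← Finset.mul_sum, mul_sub]
    rw [hD0def, hsum1, hsum2]
    nlinarith [hnear, hv, hβ]
  have hfinal := key_strict φ D0 hderiv hD0neg hconc
  rw [hφ0, hφ1] at hfinal
  exact hfinal
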